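/- Let k be a field of characteristic 2. Consider the derivation ∂ = x²·∂/∂x + t·∂/∂y on R = k[x, y, t]. Then the ring of ∂-invariants R^∂ = {f ∈ R : ∂(f) = 0} equals the k-subalgebra generated by x², y², t, and tx + x²y. -/

import Mathlib

open MvPolynomial

namespace Statement9Aux

variable {k : Type*} [Field k] [CharP k 2]

/-- exponent vector builder -/
noncomputable def e (a b c : ℕ) : Fin 3 →₀ ℕ :=
  Finsupp.single 0 a + Finsupp.single 1 b + Finsupp.single 2 c

lemma e_apply0 (a b c : ℕ) : e a b c 0 = a := by
  simp [e, Finsupp.single_apply]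

lemma e_apply1 (a b c : ℕ) : e a b c 1 = b := by
  simp [e, Finsupp.single_apply]

lemma e_apply2 (a b c : ℕ) : e a b c 2 = c := by
  simp [e, Finsupp.single_apply]

lemma eq_e (m : Fin 3 →₀ ℕ) : m = e (m 0) (m 1) (m 2) := by
  ext i
  fin_cases i <;> simp [e, Finsupp.single_apply]

lemma e_add0 (a b c d : ℕ) : Finsupp.single 0 d + e a b c = e (a + d) b c := by
  ext i
  fin_cases i <;> simp [e, Finsupp.single_apply] <;> omega

lemma e_add1 (a b c d : ℕ) : e a b c + Finsupp.single 1 d = e a (b + d) c := by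
  ext i
  fin_cases i <;> simp [e, Finsupp.single_apply]

lemma e_add2 (a b c d : ℕ) : Finsupp.single 2 d + e a b c = e a b (c + d) := by
  ext i
  fin_cases i <;> simp [e, Finsupp.single_apply] <;> omega

lemma e_add0' (a b c d : ℕ) : e a b c + Finsupp.single 0 d = e (a + d) b c := by
  rw [add_comm, e_add0]

lemma cast_even (a : ℕ) : ((2 * a : ℕ) : k) = 0 := by
  push_cast
  rw [CharTwo.two_eq_zero, zero_mul]

lemma cast_odd (a : ℕ) : ((2 * a + 1 : ℕ) : k) = 1 := by
  push_cast
  rw [CharTwo.two_eq_zero, zero_mul, zero_add]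

/-- coefficient of a partial derivative -/
lemma coeff_pderiv (i : Fin 3) (f : MvPolynomial (Fin 3) k) (m : Fin 3 →₀ ℕ) :
    coeff m (pderiv i f) = ((m i + 1 : ℕ) : k) * coeff (m + Finsupp.single i 1) f := by
  induction f using MvPolynomial.induction_on' with
  | monomial s a =>
      rw [pderiv_monomial, coeff_monomial, coeff_monomial]
      by_cases h : s = m + Finsupp.single i 1
      · subst h
        rw [if_pos (add_tsub_cancel_right _ _), if_pos rfl]
        have hsi : ((m + Finsupp.single i 1 : Fin 3 →₀ ℕ)) i = m i + 1 := by
          rw [Finsupp.add_apply, Finsupp.single_apply, if_pos rfl]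
        rw [hsi]
        push_cast
        ring
      · rw [if_neg h, mul_zero]
        by_cases hs : s i = 0
        · by_cases h2 : s - Finsupp.single i 1 = m
          · rw [if_pos h2, hs]; simp
          · rw [if_neg h2]
        · have hle : Finsupp.single i 1 ≤ s := by
            rw [Finsupp.single_le_iff]
            omega
          have : s - Finsupp.single i 1 ≠ m := by
            intro hcon
            apply h
            rw [← hcon, tsub_add_cancel_of_le hle]
          rw [if_neg this]
  | add p q hp hq =>
      simp only [map_add, coeff_add, hp, hq]
      ring

section Kernel

variable (f : MvPolynomial (Fin 3) k)
variable (hf : X 0 ^ 2 * pderiv 0 f + X 2 * pderiv 1 f = 0)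

include hf

lemma H1 (a b c : ℕ) :
    ((a + 1 : ℕ) : k) * coeff (e (a + 1) b (c + 1)) f
      + ((b + 1 : ℕ) : k) * coeff (e (a + 2) (b + 1) c) f = 0 := by
  have h := congrArg (coeff (e (a + 2) b (c + 1))) hf
  rw [coeff_add, coeff_zero] at h
  have h1 : coeff (e (a + 2) b (c + 1)) (X 0 ^ 2 * pderiv 0 f)
      = ((a + 1 : ℕ) : k) * coeff (e (a + 1) b (c + 1)) f := by
    rw [X_pow_eq_monomial, ← e_add0 a b (c + 1) 2, coeff_monomial_mul, one_mul,
      coeff_pderiv, e_apply0, e_add0']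
  have h2 : coeff (e (a + 2) b (c + 1)) (X 2 * pderiv 1 f)
      = ((b + 1 : ℕ) : k) * coeff (e (a + 2) (b + 1) c) f := by
    rw [← e_add2 (a + 2) b c 1, coeff_X_mul, coeff_pderiv, e_apply1, e_add1]
  rw [h1, h2] at h
  exact h

lemma H2 (a b : ℕ) : ((a + 1 : ℕ) : k) * coeff (e (a + 1) b 0) f = 0 := by
  have h := congrArg (coeff (e (a + 2) b 0)) hf
  rw [coeff_add, coeff_zero] at h
  have h1 : coeff (e (a + 2) b 0) (X 0 ^ 2 * pderiv 0 f)
      = ((a + 1 : ℕ) : k) * coeff (e (a + 1) b 0) f := by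
    rw [X_pow_eq_monomial, ← e_add0 a b 0 2, coeff_monomial_mul, one_mul,
      coeff_pderiv, e_apply0, e_add0']
  have h2 : coeff (e (a + 2) b 0) (X 2 * pderiv 1 f) = 0 := by
    classical
    rw [coeff_X_mul']
    simp [e_apply2, Finsupp.mem_support_iff]
  rw [h1, h2, add_zero] at h
  exact h

lemma H3 (b c : ℕ) : ((b + 1 : ℕ) : k) * coeff (e 0 (b + 1) c) f = 0 := by
  have h := congrArg (coeff (e 0 b (c + 1))) hf
  rw [coeff_add, coeff_zero] at h
  have h1 : coeff (e 0 b (c + 1)) (X 0 ^ 2 * pderiv 0 f) = 0 := by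
    rw [X_pow_eq_monomial, coeff_monomial_mul', if_neg]
    rw [Finsupp.single_le_iff, e_apply0]
    omega
  have h2 : coeff (e 0 b (c + 1)) (X 2 * pderiv 1 f)
      = ((b + 1 : ℕ) : k) * coeff (e 0 (b + 1) c) f := by
    rw [← e_add2 0 b c 1, coeff_X_mul, coeff_pderiv, e_apply1, e_add1]
  rw [h1, h2, zero_add] at h
  exact h

lemma K1 (a b c : ℕ) : coeff (e (2 * a + 1) (2 * b + 1) c) f = 0 := by
  cases c with
  | zero =>
      have := H2 f hf (2 * a) (2 * b + 1)
      rwa [cast_odd, one_mul] at this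
  | succ c =>
      have := H1 f hf (2 * a) (2 * b + 1) c
      rw [cast_odd, one_mul] at this
      have h2 : ((2 * b + 1 + 1 : ℕ) : k) = 0 := by
        have he : (2 * b + 1 + 1 : ℕ) = 2 * (b + 1) := by ring
        rw [he, cast_even]
      rw [h2, zero_mul, add_zero] at this
      exact this

lemma K2 (b c : ℕ) : coeff (e 0 (2 * b + 1) c) f = 0 := by
  have := H3 f hf (2 * b) c
  rwa [cast_odd, one_mul] at this

lemma K3 (a b : ℕ) : coeff (e (2 * a + 1) (2 * b) 0) f = 0 := by
  have := H2 f hf (2 * a) (2 * b)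
  rwa [cast_odd, one_mul] at this

lemma K4 (a b c : ℕ) :
    coeff (e (2 * a + 1) (2 * b) (c + 1)) f = coeff (e (2 * a + 2) (2 * b + 1) c) f := by
  have h := H1 f hf (2 * a) (2 * b) c
  rw [cast_odd, one_mul, cast_odd, one_mul] at h
  have h3 : (2 * a + 2 : ℕ) = 2 * a + 1 + 1 := by ring
  rw [CharTwo.add_eq_iff_eq_add, zero_add] at h
  rw [h3]
  exact h

end Kernel

/-- The generating set. -/
def S : Set (MvPolynomial (Fin 3) k) :=
  {X 0 ^ 2, X 1 ^ 2, X 2, X 2 * X 0 + X 0 ^ 2 * X 1}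

lemma mono_mem (a b c : ℕ) (r : k) :
    (monomial (e (2 * a) (2 * b) c) r : MvPolynomial (Fin 3) k) ∈ Algebra.adjoin k (S (k := k)) := by
  have key : (monomial (e (2 * a) (2 * b) c) r : MvPolynomial (Fin 3) k)
      = C r * ((X 0 ^ 2) ^ a * (X 1 ^ 2) ^ b * (X 2) ^ c) := by
    rw [← pow_mul, ← pow_mul, X_pow_eq_monomial, X_pow_eq_monomial, X_pow_eq_monomial,
      monomial_mul, monomial_mul, C_mul_monomial]
    have hidx : Finsupp.single (0 : Fin 3) (2 * a) + Finsupp.single 1 (2 * b)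
        + Finsupp.single 2 c = e (2 * a) (2 * b) c := rfl
    rw [hidx]
    norm_num
  rw [key]
  refine mul_mem (Subalgebra.algebraMap_mem _ r) ?_
  refine mul_mem (mul_mem (pow_mem ?_ a) (pow_mem ?_ b)) (pow_mem ?_ c)
  · exact Algebra.subset_adjoin (by simp [S])
  · exact Algebra.subset_adjoin (by simp [S])
  · exact Algebra.subset_adjoin (by simp [S])

lemma g_mem : (X 2 * X 0 + X 0 ^ 2 * X 1 : MvPolynomial (Fin 3) k) ∈ Algebra.adjoin k (S (k := k)) :=
  Algebra.subset_adjoin (by simp [S])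

/-- Easy direction: everything in the adjoin is killed by the derivation. -/
lemma easyDir (f : MvPolynomial (Fin 3) k) (hf : f ∈ Algebra.adjoin k (S (k := k))) :
    X 0 ^ 2 * pderiv 0 f + X 2 * pderiv 1 f = 0 := by
  have h2 : (2 : MvPolynomial (Fin 3) k) = 0 := CharTwo.two_eq_zero
  induction hf using Algebra.adjoin_induction with
  | mem x hx =>
      rcases hx with h | h | h | h <;> subst h
      · simp only [pderiv_pow, pderiv_X_self, pderiv_X_of_ne (show (0:Fin 3) ≠ 1 by decide)]
        push_cast
        rw [h2]; ring
      · simp only [pderiv_pow, pderiv_X_self, pderiv_X_of_ne (show (1:Fin 3) ≠ 0 by decide)]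
        push_cast
        rw [h2]; ring
      · simp only [pderiv_X_of_ne (show (2:Fin 3) ≠ 0 by decide),
          pderiv_X_of_ne (show (2:Fin 3) ≠ 1 by decide)]
        ring
      · simp only [map_add, pderiv_mul, pderiv_pow, pderiv_X_self,
          pderiv_X_of_ne (show (2:Fin 3) ≠ 0 by decide),
          pderiv_X_of_ne (show (2:Fin 3) ≠ 1 by decide),
          pderiv_X_of_ne (show (0:Fin 3) ≠ 1 by decide),
          pderiv_X_of_ne (show (1:Fin 3) ≠ 0 by decide)]
        push_cast
        rw [h2]
        linear_combination (X 0 ^ 2 * X 2 : MvPolynomial (Fin 3) k) * h2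
  | algebraMap r =>
      simp [algebraMap_eq, pderiv_C]
  | add p q hp hq ihp ihq =>
      simp only [map_add]
      linear_combination ihp + ihq
  | mul p q hp hq ihp ihq =>
      simp only [pderiv_mul]
      linear_combination p * ihq + q * ihp

lemma block_eq (a b c : ℕ) (r : k) :
    (monomial (e (2 * a) (2 * b) c) r : MvPolynomial (Fin 3) k)
        * (X 2 * X 0 + X 0 ^ 2 * X 1)
      = monomial (e (2 * a + 1) (2 * b) (c + 1)) r
        + monomial (e (2 * a + 2) (2 * b + 1) c) r := by
  have hX : ∀ i : Fin 3, (X i : MvPolynomial (Fin 3) k) = monomial (Finsupp.single i 1) 1 := by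
    intro i
    rw [← X_pow_eq_monomial, pow_one]
  have hidx1 : e (2 * a) (2 * b) c + Finsupp.single 2 1 + Finsupp.single 0 1
      = e (2 * a + 1) (2 * b) (c + 1) := by
    ext i
    fin_cases i <;> simp [e, Finsupp.single_apply] <;> omega
  have hidx2 : e (2 * a) (2 * b) c + Finsupp.single 0 2 + Finsupp.single 1 1
      = e (2 * a + 2) (2 * b + 1) c := by
    ext i
    fin_cases i <;> simp [e, Finsupp.single_apply] <;> omega
  rw [mul_add]
  congr 1
  · rw [hX 2, hX 0, ← mul_assoc, monomial_mul, monomial_mul, mul_one, mul_one, hidx1]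
  · rw [X_pow_eq_monomial, hX 1, ← mul_assoc, monomial_mul, monomial_mul, mul_one, mul_one, hidx2]

lemma hard (N : ℕ) : ∀ f : MvPolynomial (Fin 3) k, f.support.card ≤ N →
    X 0 ^ 2 * pderiv 0 f + X 2 * pderiv 1 f = 0 →
    f ∈ Algebra.adjoin k (S (k := k)) := by
  induction N with
  | zero =>
      intro f hcard _
      have : f = 0 := by
        rw [← MvPolynomial.support_eq_empty, ← Finset.card_eq_zero]
        omega
      rw [this]
      exact zero_mem _
  | succ N ih =>
      intro f hcard hf
      by_cases h0 : f = 0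
      · rw [h0]; exact zero_mem _
      by_cases hodd : ∃ m ∈ f.support, Odd (m 0)
      · -- Case A: there is a monomial with odd x-exponent
        obtain ⟨m, hm, a, ha⟩ := hodd
        have hme := eq_e m
        have hb : ∃ b, m 1 = 2 * b := by
          rcases Nat.even_or_odd (m 1) with h | h
          · obtain ⟨b, hb⟩ := h; exact ⟨b, by omega⟩
          · exfalso
            obtain ⟨b, hb⟩ := h
            have hz := K1 f hf a b (m 2)
            rw [← ha, ← hb, ← hme] at hz
            exact (MvPolynomial.mem_support_iff.mp hm) hz
        obtain ⟨b, hb⟩ := hb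
        have hc : ∃ c, m 2 = c + 1 := by
          cases hl : m 2 with
          | zero =>
              exfalso
              have hz := K3 f hf a b
              rw [← ha, ← hb, ← hl, ← hme] at hz
              exact (MvPolynomial.mem_support_iff.mp hm) hz
          | succ c => exact ⟨c, rfl⟩
        obtain ⟨c, hc⟩ := hc
        set r := coeff m f with hr
        set blk := ((monomial (e (2 * a) (2 * b) c) r : MvPolynomial (Fin 3) k)
          * (X 2 * X 0 + X 0 ^ 2 * X 1)) with hblk
        have hblkS : blk ∈ Algebra.adjoin k (S (k := k)) := mul_mem (mono_mem a b c r) g_mem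
        have hblkD := easyDir blk hblkS
        have hmE : m = e (2 * a + 1) (2 * b) (c + 1) := by
          rw [hme, ha, hb, hc]
        have hq_ne : e (2 * a + 2) (2 * b + 1) c ≠ m := by
          intro hcon
          have h0' := congrArg (fun v : Fin 3 →₀ ℕ => v 0) hcon
          rw [hmE] at h0'
          simp only [e_apply0] at h0'
          omega
        have hK4 : r = coeff (e (2 * a + 2) (2 * b + 1) c) f := by
          rw [hr, hmE]
          exact K4 f hf a b c
        have hsupp : (f - blk).support ⊆ f.support.erase m := by
          intro n hn
          rw [MvPolynomial.mem_support_iff] at hn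
          rw [coeff_sub, hblk, block_eq, coeff_add, coeff_monomial, coeff_monomial] at hn
          rw [Finset.mem_erase, MvPolynomial.mem_support_iff]
          by_cases h1 : n = m
          · exfalso
            apply hn
            rw [h1, if_pos hmE.symm, if_neg hq_ne, add_zero, hr, sub_self]
          · refine ⟨h1, ?_⟩
            by_cases h2 : e (2 * a + 2) (2 * b + 1) c = n
            · exfalso
              apply hn
              rw [if_neg (fun hcc : e (2 * a + 1) (2 * b) (c + 1) = n =>
                h1 (by rw [← hcc, ← hmE])), if_pos h2, zero_add, ← h2, ← hK4, sub_self]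
            · intro hcon
              apply hn
              rw [if_neg (fun hcc : e (2 * a + 1) (2 * b) (c + 1) = n =>
                h1 (by rw [← hcc, ← hmE])), if_neg h2, add_zero, hcon, sub_zero]
        have hcard' : (f - blk).support.card ≤ N := by
          have h1 := Finset.card_le_card hsupp
          have h2' := Finset.card_erase_of_mem hm
          have h3 : 1 ≤ f.support.card := Finset.card_pos.mpr ⟨m, hm⟩
          omega
        have hDf' : X 0 ^ 2 * pderiv 0 (f - blk) + X 2 * pderiv 1 (f - blk) = 0 := by
          simp only [map_sub]
          linear_combination hf - hblkD
        have hf'mem := ih (f - blk) hcard' hDf'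
        have hfeq : f = (f - blk) + blk := by ring
        rw [hfeq]
        exact add_mem hf'mem hblkS
      · -- Case B: all monomials have even x-exponent
        push_neg at hodd
        obtain ⟨m, hm⟩ := (MvPolynomial.support_nonempty.mpr h0)
        have ha : ∃ a, m 0 = 2 * a := by
          have h := hodd m hm
          rw [Nat.not_odd_iff_even] at h
          obtain ⟨a, hx⟩ := h
          exact ⟨a, by omega⟩
        obtain ⟨a, ha⟩ := ha
        have hb : ∃ b, m 1 = 2 * b := by
          rcases Nat.even_or_odd (m 1) with h | h
          · obtain ⟨b, hb⟩ := h; exact ⟨b, by omega⟩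
          · exfalso
            obtain ⟨b, hb⟩ := h
            have hcm : coeff m f = 0 := by
              rcases Nat.eq_zero_or_pos a with h0a | h0a
              · have hz := K2 f hf b (m 2)
                rw [eq_e m, ha, hb, h0a]
                simpa using hz
              · obtain ⟨a', ha'⟩ : ∃ a', a = a' + 1 := ⟨a - 1, by omega⟩
                have hzero : coeff (e (2 * a' + 1) (2 * b) (m 2 + 1)) f = 0 := by
                  by_contra hne
                  have hmem : e (2 * a' + 1) (2 * b) (m 2 + 1) ∈ f.support :=
                    MvPolynomial.mem_support_iff.mpr hne
                  have := hodd _ hmem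
                  rw [e_apply0] at this
                  exact this ⟨a', rfl⟩
                have hk4 := K4 f hf a' b (m 2)
                rw [hzero] at hk4
                rw [eq_e m, ha, hb, ha']
                rw [show 2 * (a' + 1) = 2 * a' + 2 by ring]
                exact hk4.symm
            exact (MvPolynomial.mem_support_iff.mp hm) hcm
        obtain ⟨b, hb⟩ := hb
        set r := coeff m f with hr
        set blk := (monomial (e (2 * a) (2 * b) (m 2)) r : MvPolynomial (Fin 3) k) with hblk
        have hblkS : blk ∈ Algebra.adjoin k (S (k := k)) := mono_mem a b (m 2) r
        have hblkD := easyDir blk hblkS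
        have hmE : m = e (2 * a) (2 * b) (m 2) := by
          conv_lhs => rw [eq_e m, ha, hb]
        have hsupp : (f - blk).support ⊆ f.support.erase m := by
          intro n hn
          rw [MvPolynomial.mem_support_iff] at hn
          rw [coeff_sub, hblk, coeff_monomial] at hn
          rw [Finset.mem_erase, MvPolynomial.mem_support_iff]
          by_cases h1 : n = m
          · exfalso
            apply hn
            rw [h1, if_pos hmE.symm, hr, sub_self]
          · refine ⟨h1, fun hcon => hn ?_⟩
            rw [if_neg (fun hcc : e (2 * a) (2 * b) (m 2) = n => h1 (by rw [← hcc, ← hmE])),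
              hcon, sub_zero]
        have hcard' : (f - blk).support.card ≤ N := by
          have h1 := Finset.card_le_card hsupp
          have h2' := Finset.card_erase_of_mem hm
          have h3 : 1 ≤ f.support.card := Finset.card_pos.mpr ⟨m, hm⟩
          omega
        have hDf' : X 0 ^ 2 * pderiv 0 (f - blk) + X 2 * pderiv 1 (f - blk) = 0 := by
          simp only [map_sub]
          linear_combination hf - hblkD
        have hf'mem := ih (f - blk) hcard' hDf'
        have hfeq : f = (f - blk) + blk := by ring
        rw [hfeq]
        exact add_mem hf'mem hblkS

end Statement9Aux

/-- Let `k` be a field of characteristic `2` and `R = k[x, y, t]`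
(`x = X 0`, `y = X 1`, `t = X 2`).  For the derivation `∂ = x² ∂/∂x + t ∂/∂y`, the
ring of `∂`-invariants is exactly the `k`-subalgebra generated by
`x²`, `y²`, `t` and `tx + x²y`. -/
theorem statement9 {k : Type*} [Field k] [CharP k 2] (f : MvPolynomial (Fin 3) k) :
    X 0 ^ 2 * pderiv 0 f + X 2 * pderiv 1 f = 0 ↔
      f ∈ Algebra.adjoin k
        ({X 0 ^ 2, X 1 ^ 2, X 2, X 2 * X 0 + X 0 ^ 2 * X 1} :
          Set (MvPolynomial (Fin 3) k)) := by
  constructor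
  · intro hf
    exact Statement9Aux.hard f.support.card f le_rfl hf
  · intro hf
    exact Statement9Aux.easyDir f hf
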